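/- Let A be a unique factorization domain, let ξ ∈ K̄ be such that 1, ξ and ξ² are linearly independent over K, let 0 < c₁ < 6^{−1/2} and X₀ ≥ 1, and suppose that for every real X ≥ X₀ there is a primitive triple x ∈ A³ with |x₀| ≤ X and L(x) ≤ c₁·X^{−1/γ}. Then there exists a sequence (x_i)_{i≥1} of primitive triples in A³ such that, setting X_i = |x_{i,0}| and L_i = L(x_i), one has for every i ≥ 1: L_i ≤ 2c₁·X_{i+1}^{−1/γ}, L_{i+1} ≤ L_i/2, X_i ≤ X_{i+1}, the points x_i and x_{i+1} are linearly independent over K, and moreover X_i → ∞ as i → ∞. -/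

import Mathlib

open Filter

section MPAux

set_option linter.unusedSectionVars false
set_option linter.unusedVariables false

variable {A : Type*} [CommRing A] [IsDomain A] [UniqueFactorizationMonoid A]
  {K : Type*} [Field K] [Algebra A K] [IsFractionRing A K]
  {L : Type*} [Field L]

variable (f : K →+* L) (abv : AbsoluteValue L ℝ) (ξ : L)

/-- Primitivity of a triple. -/
abbrev MPprim (y : Fin 3 → A) : Prop := ∀ d : A, d ∣ y 0 → d ∣ y 1 → d ∣ y 2 → IsUnit d

/-- Height of a triple. -/
abbrev MPht (y : Fin 3 → A) : ℝ := abv (f (algebraMap A K (y 0)))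

/-- The approximation quantity `L` of a triple. -/
abbrev MPLf (y : Fin 3 → A) : ℝ :=
  max (abv (f (algebraMap A K (y 0)) * ξ - f (algebraMap A K (y 1))))
      (abv (f (algebraMap A K (y 0)) * ξ ^ 2 - f (algebraMap A K (y 2))))

theorem MPLf_nonneg (y : Fin 3 → A) : 0 ≤ MPLf f abv ξ y :=
  le_trans (abv.nonneg _) (le_max_left _ _)

theorem MPht_nonneg (y : Fin 3 → A) : 0 ≤ MPht f abv y := abv.nonneg _

theorem MP_kill (habv_A : ∀ a : A, a ≠ 0 → 1 ≤ abv (f (algebraMap A K a)))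
    {a : A} (h : abv (f (algebraMap A K a)) < 1) : a = 0 := by
  by_contra h0; exact absurd h (not_lt.2 (habv_A a h0))

theorem MP_unit_abv (habv_A : ∀ a : A, a ≠ 0 → 1 ≤ abv (f (algebraMap A K a)))
    {u : A} (hu : IsUnit u) : abv (f (algebraMap A K u)) = 1 := by
  obtain ⟨w, rfl⟩ := hu
  have hv : (w : A) * (w⁻¹ : Aˣ) = 1 := w.mul_inv
  have h1 : abv (f (algebraMap A K (w : A))) * abv (f (algebraMap A K ((w⁻¹ : Aˣ) : A))) = 1 := by
    rw [← abv.map_mul, ← map_mul, ← map_mul, hv, map_one, map_one, abv.map_one]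
  have hu' := habv_A _ (left_ne_zero_of_mul_eq_one hv)
  have hv' := habv_A _ (right_ne_zero_of_mul_eq_one hv)
  nlinarith

theorem MP_prim_ne {y : Fin 3 → A} (hy : MPprim y) : ¬(y 0 = 0 ∧ y 1 = 0 ∧ y 2 = 0) := by
  rintro ⟨h0, h1, h2⟩
  exact not_isUnit_zero (hy 0 (by rw [h0]) (by rw [h1]) (by rw [h2]))

theorem MP_x0_ne_zero (habv_A : ∀ a : A, a ≠ 0 → 1 ≤ abv (f (algebraMap A K a)))
    {y : Fin 3 → A} (hy : MPprim y) (hL : MPLf f abv ξ y < 1) :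
    y 0 ≠ 0 := by
  intro h0
  rw [MPLf, h0] at hL
  simp only [map_zero, zero_mul, zero_sub, abv.map_neg] at hL
  rw [max_lt_iff] at hL
  exact MP_prim_ne hy ⟨h0, MP_kill f abv habv_A hL.1, MP_kill f abv habv_A hL.2⟩

theorem MP_L_pos (hξ : ∀ c₀ c₁ c₂ : K, f c₀ + f c₁ * ξ + f c₂ * ξ ^ 2 = 0 →
      c₀ = 0 ∧ c₁ = 0 ∧ c₂ = 0)
    {y : Fin 3 → A} (h0 : y 0 ≠ 0) : 0 < MPLf f abv ξ y := by
  rcases (MPLf_nonneg f abv ξ y).lt_or_eq with h | h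
  · exact h
  exfalso
  have h1 : abv (f (algebraMap A K (y 0)) * ξ - f (algebraMap A K (y 1))) = 0 :=
    le_antisymm (h ▸ le_max_left _ _) (abv.nonneg _)
  have e1 : f (algebraMap A K (y 0)) * ξ - f (algebraMap A K (y 1)) = 0 := abv.eq_zero.1 h1
  have h2 := hξ (-(algebraMap A K (y 1))) (algebraMap A K (y 0)) 0 (by
    rw [map_neg, map_zero]
    linear_combination e1)
  exact h0 (IsFractionRing.injective A K (by rw [h2.2.1, map_zero]))

/-- Proportional primitive triples differ by a unit, hence have the same height and `L`. -/
theorem MP_prop (habv_A : ∀ a : A, a ≠ 0 → 1 ≤ abv (f (algebraMap A K a)))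
    {x y : Fin 3 → A} (hx : MPprim x) (hy : MPprim y)
    {t : K} (hprop : ∀ j, algebraMap A K (y j) = t * algebraMap A K (x j)) :
    MPht f abv y = MPht f abv x ∧ MPLf f abv ξ y = MPLf f abv ξ x := by
  classical
  obtain ⟨a, b, hab, hmk⟩ := IsFractionRing.exists_reduced_fraction A t
  have hbK : algebraMap A K (b : A) ≠ 0 :=
    IsFractionRing.to_map_ne_zero_of_mem_nonZeroDivisors b.2
  have htab : t * algebraMap A K (b : A) = algebraMap A K a := by
    rw [← hmk, IsFractionRing.mk'_eq_div, div_mul_cancel₀ _ hbK]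
  have key : ∀ j, y j * (b : A) = a * x j := by
    intro j
    apply IsFractionRing.injective A K
    rw [map_mul, map_mul, hprop j, ← htab]
    ring
  have hbdvd : ∀ j, (b : A) ∣ x j := by
    intro j
    have hd : (b : A) ∣ a * x j := ⟨y j, by rw [← key j]; ring⟩
    exact hab.symm.dvd_of_dvd_mul_left hd
  have hadvd : ∀ j, a ∣ y j := by
    intro j
    have hd : a ∣ y j * (b : A) := ⟨x j, key j⟩
    exact hab.dvd_of_dvd_mul_right hd
  have hbu : IsUnit (b : A) := hx _ (hbdvd 0) (hbdvd 1) (hbdvd 2)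
  have hau : IsUnit a := hy _ (hadvd 0) (hadvd 1) (hadvd 2)
  have hA : abv (f (algebraMap A K a)) = 1 := MP_unit_abv f abv habv_A hau
  have hB : abv (f (algebraMap A K (b : A))) = 1 := MP_unit_abv f abv habv_A hbu
  have hft : abv (f t) = 1 := by
    have h1 : abv (f t) * abv (f (algebraMap A K (b : A))) = abv (f (algebraMap A K a)) := by
      rw [← abv.map_mul, ← map_mul, htab]
    rw [hB, hA, mul_one] at h1
    exact h1
  constructor
  · rw [MPht, MPht, hprop 0, map_mul, abv.map_mul, hft, one_mul]
  · have e1 : f (algebraMap A K (y 0)) * ξ - f (algebraMap A K (y 1))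
        = f t * (f (algebraMap A K (x 0)) * ξ - f (algebraMap A K (x 1))) := by
      rw [hprop 0, hprop 1, map_mul, map_mul]; ring
    have e2 : f (algebraMap A K (y 0)) * ξ ^ 2 - f (algebraMap A K (y 2))
        = f t * (f (algebraMap A K (x 0)) * ξ ^ 2 - f (algebraMap A K (x 2))) := by
      rw [hprop 0, hprop 2, map_mul, map_mul]; ring
    rw [MPLf, MPLf, e1, e2, abv.map_mul, abv.map_mul, hft, one_mul, one_mul]

/-- Two primitive triples with small cross terms have equal `L`. -/
theorem MP_det (habv_A : ∀ a : A, a ≠ 0 → 1 ≤ abv (f (algebraMap A K a)))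
    {x y : Fin 3 → A} (hx : MPprim x) (hy : MPprim y)
    (hx0 : x 0 ≠ 0) (hy0 : y 0 ≠ 0)
    (hb : MPht f abv y * MPLf f abv ξ x + MPht f abv x * MPLf f abv ξ y < 1) :
    MPLf f abv ξ y = MPLf f abv ξ x := by
  have habv_sub : ∀ p q : L, abv (p - q) ≤ abv p + abv q := fun p q => by
    rw [sub_eq_add_neg]
    exact le_trans (abv.add_le _ _) (by rw [abv.map_neg])
  have hdet : ∀ (p : L) (j : Fin 3),
      (∀ z : Fin 3 → A,
        abv (f (algebraMap A K (z 0)) * p - f (algebraMap A K (z j))) ≤ MPLf f abv ξ z) →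
      x 0 * y j - y 0 * x j = 0 := by
    intro p j hp
    apply MP_kill f abv habv_A
    have hid : f (algebraMap A K (x 0 * y j - y 0 * x j)) =
        f (algebraMap A K (y 0)) * (f (algebraMap A K (x 0)) * p - f (algebraMap A K (x j)))
        - f (algebraMap A K (x 0)) * (f (algebraMap A K (y 0)) * p - f (algebraMap A K (y j))) := by
      rw [map_sub, map_sub, map_mul, map_mul, map_mul, map_mul]
      ring
    rw [hid]
    calc abv _
        ≤ abv (f (algebraMap A K (y 0)) * (f (algebraMap A K (x 0)) * p - f (algebraMap A K (x j))))
          + abv (f (algebraMap A K (x 0)) * (f (algebraMap A K (y 0)) * p - f (algebraMap A K (y j)))) :=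
        habv_sub _ _
      _ ≤ MPht f abv y * MPLf f abv ξ x + MPht f abv x * MPLf f abv ξ y := by
        rw [abv.map_mul, abv.map_mul]
        exact add_le_add
          (mul_le_mul_of_nonneg_left (hp x) (abv.nonneg _))
          (mul_le_mul_of_nonneg_left (hp y) (abv.nonneg _))
      _ < 1 := hb
  have hD1 : x 0 * y 1 - y 0 * x 1 = 0 := hdet ξ 1 (fun z => le_max_left _ _)
  have hD2 : x 0 * y 2 - y 0 * x 2 = 0 := hdet (ξ ^ 2) 2 (fun z => le_max_right _ _)
  have hx0K : algebraMap A K (x 0) ≠ 0 := fun h =>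
    hx0 (IsFractionRing.injective A K (by rw [h, map_zero]))
  have hprop : ∀ j, algebraMap A K (y j) =
      (algebraMap A K (y 0) / algebraMap A K (x 0)) * algebraMap A K (x j) := by
    have h0 : algebraMap A K (y 0) =
        (algebraMap A K (y 0) / algebraMap A K (x 0)) * algebraMap A K (x 0) := by
      rw [div_mul_cancel₀ _ hx0K]
    have h1 : algebraMap A K (y 1) =
        (algebraMap A K (y 0) / algebraMap A K (x 0)) * algebraMap A K (x 1) := by
      have e := congrArg (algebraMap A K) hD1
      rw [map_sub, map_mul, map_mul, map_zero, sub_eq_zero] at e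
      field_simp
      linear_combination e
    have h2 : algebraMap A K (y 2) =
        (algebraMap A K (y 0) / algebraMap A K (x 0)) * algebraMap A K (x 2) := by
      have e := congrArg (algebraMap A K) hD2
      rw [map_sub, map_mul, map_mul, map_zero, sub_eq_zero] at e
      field_simp
      linear_combination e
    intro j
    fin_cases j
    · exact h0
    · exact h1
    · exact h2
  exact (MP_prop f abv ξ habv_A hx hy hprop).2

/-- On any bounded height region, `L` is bounded below by a positive constant. -/
theorem MP_eps (habv_A : ∀ a : A, a ≠ 0 → 1 ≤ abv (f (algebraMap A K a)))
    (hξ : ∀ c₀ c₁ c₂ : K, f c₀ + f c₁ * ξ + f c₂ * ξ ^ 2 = 0 →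
      c₀ = 0 ∧ c₁ = 0 ∧ c₂ = 0)
    {B : ℝ} (hB : 1 ≤ B) :
    ∃ ε > 0, ∀ z : Fin 3 → A, MPprim z → z 0 ≠ 0 → MPht f abv z ≤ B →
      ε ≤ MPLf f abv ξ z := by
  have hB0 : (0:ℝ) < B := lt_of_lt_of_le one_pos hB
  by_cases hw : ∃ w : Fin 3 → A, MPprim w ∧ w 0 ≠ 0 ∧ MPht f abv w ≤ B ∧
      MPLf f abv ξ w < 1 / (2 * B)
  · obtain ⟨w, hwp, hw0, hwH, hwL⟩ := hw
    have hLw : 0 < MPLf f abv ξ w := MP_L_pos f abv ξ hξ hw0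
    refine ⟨min (1 / (2 * B)) (MPLf f abv ξ w), lt_min (by positivity) hLw, ?_⟩
    intro z hzp hz0 hzH
    by_cases hzL : MPLf f abv ξ z < 1 / (2 * B)
    · have hbnd : MPht f abv z * MPLf f abv ξ w + MPht f abv w * MPLf f abv ξ z < 1 := by
        have h1 : MPht f abv z * MPLf f abv ξ w ≤ B * MPLf f abv ξ w :=
          mul_le_mul_of_nonneg_right hzH hLw.le
        have h2 : MPht f abv w * MPLf f abv ξ z ≤ B * MPLf f abv ξ z :=
          mul_le_mul_of_nonneg_right hwH (MPLf_nonneg f abv ξ z)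
        have h3 : B * MPLf f abv ξ w < B * (1 / (2 * B)) := mul_lt_mul_of_pos_left hwL hB0
        have h4 : B * MPLf f abv ξ z < B * (1 / (2 * B)) := mul_lt_mul_of_pos_left hzL hB0
        have h5 : B * (1 / (2 * B)) = 1 / 2 := by field_simp
        linarith
      have := MP_det f abv ξ habv_A hwp hzp hw0 hz0 hbnd
      rw [this]
      exact min_le_right _ _
    · exact le_trans (min_le_left _ _) (not_lt.1 hzL)
  · push_neg at hw
    exact ⟨1 / (2 * B), by positivity, fun z hzp hz0 hzH => hw z hzp hz0 hzH⟩

/-- Selection of a quasi-minimal point below height `B`. -/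
theorem MP_select (habv_A : ∀ a : A, a ≠ 0 → 1 ≤ abv (f (algebraMap A K a)))
    (hξ : ∀ c₀ c₁ c₂ : K, f c₀ + f c₁ * ξ + f c₂ * ξ ^ 2 = 0 →
      c₀ = 0 ∧ c₁ = 0 ∧ c₂ = 0)
    {c₁ X₀ : ℝ} (hc₁ : 0 < c₁) (hc₁1 : c₁ < 1) (hX₀ : 1 ≤ X₀)
    (hsol : ∀ X : ℝ, X₀ ≤ X → ∃ x : Fin 3 → A, MPprim x ∧ MPht f abv x ≤ X ∧
      MPLf f abv ξ x ≤ c₁ * X ^ (-1 / Real.goldenRatio))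
    {B : ℝ} (hB : X₀ ≤ B) :
    ∃ y : Fin 3 → A, MPprim y ∧ y 0 ≠ 0 ∧ MPht f abv y ≤ B ∧
      MPLf f abv ξ y ≤ c₁ * B ^ (-1 / Real.goldenRatio) ∧
      ∀ z : Fin 3 → A, MPprim z → z 0 ≠ 0 →
        MPLf f abv ξ z ≤ MPLf f abv ξ y / 2 → B < MPht f abv z := by
  have hB1 : (1:ℝ) ≤ B := le_trans hX₀ hB
  have hexp : (-1 : ℝ) / Real.goldenRatio ≤ 0 := by
    rw [neg_div]; exact neg_nonpos.2 (div_nonneg zero_le_one Real.goldenRatio_pos.le)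
  have hsmall : c₁ * B ^ (-1 / Real.goldenRatio) < 1 := by
    have h1 : B ^ (-1 / Real.goldenRatio) ≤ 1 := Real.rpow_le_one_of_one_le_of_nonpos hB1 hexp
    have h2 : (0:ℝ) < B ^ (-1 / Real.goldenRatio) := Real.rpow_pos_of_pos (by linarith) _
    nlinarith
  obtain ⟨ε, hε, hεP⟩ := MP_eps f abv ξ habv_A hξ hB1
  obtain ⟨w, hwp, hwH, hwL⟩ := hsol B hB
  have hw0 : w 0 ≠ 0 := MP_x0_ne_zero f abv ξ habv_A hwp (lt_of_le_of_lt hwL hsmall)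
  have claim : ∀ n : ℕ, ∀ y : Fin 3 → A, MPprim y → y 0 ≠ 0 → MPht f abv y ≤ B →
      MPLf f abv ξ y ≤ c₁ * B ^ (-1 / Real.goldenRatio) → MPLf f abv ξ y ≤ ε * 2 ^ n →
      ∃ y' : Fin 3 → A, MPprim y' ∧ y' 0 ≠ 0 ∧ MPht f abv y' ≤ B ∧
        MPLf f abv ξ y' ≤ c₁ * B ^ (-1 / Real.goldenRatio) ∧
        ∀ z : Fin 3 → A, MPprim z → z 0 ≠ 0 →
          MPLf f abv ξ z ≤ MPLf f abv ξ y' / 2 → B < MPht f abv z := by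
    intro n
    induction n with
    | zero =>
      intro y h1 h2 h3 h4 h5
      refine ⟨y, h1, h2, h3, h4, ?_⟩
      intro z hz1 hz2 hz3
      by_contra hcon
      push_neg at hcon
      have hge := hεP z hz1 hz2 hcon
      have he : (2:ℝ) ^ (0:ℕ) = 1 := pow_zero 2
      rw [he, mul_one] at h5
      linarith
    | succ n ih =>
      intro y h1 h2 h3 h4 h5
      by_cases hz : ∃ z : Fin 3 → A, MPprim z ∧ z 0 ≠ 0 ∧
          MPLf f abv ξ z ≤ MPLf f abv ξ y / 2 ∧ MPht f abv z ≤ B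
      · obtain ⟨z, hz1, hz2, hz3, hz4⟩ := hz
        have hy0 := MPLf_nonneg f abv ξ y
        have hp : (2:ℝ) ^ (n+1) = 2 * 2 ^ n := by ring
        refine ih z hz1 hz2 hz4 (by linarith) (by rw [hp] at h5; linarith)
      · push_neg at hz
        refine ⟨y, h1, h2, h3, h4, ?_⟩
        intro z hz1 hz2 hz3
        exact hz z hz1 hz2 hz3
  obtain ⟨n, hn⟩ := pow_unbounded_of_one_lt ((c₁ * B ^ (-1 / Real.goldenRatio)) / ε)
    (one_lt_two (α := ℝ))
  have hLn : c₁ * B ^ (-1 / Real.goldenRatio) ≤ ε * 2 ^ n := by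
    rw [div_lt_iff₀ hε] at hn
    linarith
  exact claim n w hwp hw0 hwH hwL (le_trans hwL hLn)

/-- Dependent choice with an invariant. -/
theorem MP_depChoice {α : Type*} {P : α → Prop} {R : α → α → Prop}
    (base : ∃ a, P a) (step : ∀ a, P a → ∃ b, P b ∧ R a b) :
    ∃ s : ℕ → α, (∀ n, P (s n)) ∧ ∀ n, R (s n) (s (n + 1)) := by
  obtain ⟨a0, ha0⟩ := base
  choose! g hPg hRg using step
  refine ⟨fun n => Nat.rec a0 (fun _ x => g x) n, ?_, ?_⟩
  · intro n
    induction n with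
    | zero => exact ha0
    | succ n ih => exact hPg _ ih
  · intro n
    have hP : P (Nat.rec a0 (fun _ x => g x) n : α) := by
      induction n with
      | zero => exact ha0
      | succ n ih => exact hPg _ ih
    exact hRg _ hP

end MPAux

/-- **Construction of the sequence of minimal points.** `A` is a UFD with fraction
field `K`, `L = K̄` is the completion of `K` for a nontrivial absolute value `abv`
with `abv a ≥ 1` for nonzero `a ∈ A`, and `ξ ∈ K̄` is such that `1, ξ, ξ²` are
`K`-linearly independent.  Let `0 < c₁ < 6^(-1/2)`, `X₀ ≥ 1`, and suppose that for
every `X ≥ X₀` there is a primitive triple `x ∈ A³` with `|x₀| ≤ X` and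
`L(x) ≤ c₁ X^(-1/γ)`.  Then there is a sequence `(x_i)_{i ≥ 1}` of primitive triples
in `A³` such that, with `X_i = |x_{i,0}|` and `L_i = L(x_i)`, for every `i ≥ 1`:
`L_i ≤ 2c₁ X_{i+1}^(-1/γ)`, `L_{i+1} ≤ L_i / 2`, `X_i ≤ X_{i+1}`, the points `x_i` and
`x_{i+1}` are linearly independent over `K`, and `X_i → ∞`. -/
theorem minimal_points_sequence
    {A : Type*} [CommRing A] [IsDomain A] [UniqueFactorizationMonoid A]
    {K : Type*} [Field K] [Algebra A K] [IsFractionRing A K]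
    {L : Type*} [Field L] [MetricSpace L] [CompleteSpace L]
    (f : K →+* L) (hdense : DenseRange f)
    (abv : AbsoluteValue L ℝ)
    (hdist : ∀ x y : L, dist x y = abv (x - y))
    (habv_nontrivial : ∃ x : K, abv (f x) ≠ 0 ∧ abv (f x) ≠ 1)
    (habv_A : ∀ a : A, a ≠ 0 → 1 ≤ abv (f (algebraMap A K a)))
    (ξ : L)
    (hξ : ∀ c₀ c₁ c₂ : K, f c₀ + f c₁ * ξ + f c₂ * ξ ^ 2 = 0 →
      c₀ = 0 ∧ c₁ = 0 ∧ c₂ = 0)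
    (c₁ X₀ : ℝ) (hc₁ : 0 < c₁) (hc₁' : c₁ < (6 : ℝ) ^ (-1 / 2 : ℝ)) (hX₀ : 1 ≤ X₀)
    (hsol : ∀ X : ℝ, X₀ ≤ X → ∃ x : Fin 3 → A,
      (∀ d : A, d ∣ x 0 → d ∣ x 1 → d ∣ x 2 → IsUnit d) ∧
      abv (f (algebraMap A K (x 0))) ≤ X ∧
      max (abv (f (algebraMap A K (x 0)) * ξ - f (algebraMap A K (x 1))))
          (abv (f (algebraMap A K (x 0)) * ξ ^ 2 - f (algebraMap A K (x 2))))
        ≤ c₁ * X ^ (-1 / Real.goldenRatio)) :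
    ∃ x : ℕ → Fin 3 → A,
      (∀ i : ℕ, 1 ≤ i → ∀ d : A, d ∣ x i 0 → d ∣ x i 1 → d ∣ x i 2 → IsUnit d) ∧
      (∀ i : ℕ, 1 ≤ i →
        max (abv (f (algebraMap A K (x i 0)) * ξ - f (algebraMap A K (x i 1))))
            (abv (f (algebraMap A K (x i 0)) * ξ ^ 2 - f (algebraMap A K (x i 2))))
          ≤ 2 * c₁ * (abv (f (algebraMap A K (x (i + 1) 0)))) ^ (-1 / Real.goldenRatio) ∧
        max (abv (f (algebraMap A K (x (i + 1) 0)) * ξ - f (algebraMap A K (x (i + 1) 1))))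
            (abv (f (algebraMap A K (x (i + 1) 0)) * ξ ^ 2 - f (algebraMap A K (x (i + 1) 2))))
          ≤ (max (abv (f (algebraMap A K (x i 0)) * ξ - f (algebraMap A K (x i 1))))
              (abv (f (algebraMap A K (x i 0)) * ξ ^ 2 - f (algebraMap A K (x i 2))))) / 2 ∧
        abv (f (algebraMap A K (x i 0))) ≤ abv (f (algebraMap A K (x (i + 1) 0))) ∧
        (∀ c d : K, (c • fun j => algebraMap A K (x i j)) + (d • fun j => algebraMap A K (x (i + 1) j)) = (0 : Fin 3 → K) →
          c = 0 ∧ d = 0)) ∧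
      Tendsto (fun i => abv (f (algebraMap A K (x i 0)))) atTop atTop := by
  classical
  have hgpos : (0:ℝ) < Real.goldenRatio := Real.goldenRatio_pos
  have hgne : (Real.goldenRatio : ℝ) ≠ 0 := ne_of_gt hgpos
  have hexp : (-1 : ℝ) / Real.goldenRatio ≤ 0 := by
    rw [neg_div]; exact neg_nonpos.2 (div_nonneg zero_le_one hgpos.le)
  have hc1lt1 : c₁ < 1 :=
    lt_trans hc₁' (Real.rpow_lt_one_of_one_lt_of_neg (by norm_num) (by norm_num))
  have hX₀pos : (0:ℝ) < X₀ := lt_of_lt_of_le one_pos hX₀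
  have hsol' : ∀ X : ℝ, X₀ ≤ X → ∃ x : Fin 3 → A, MPprim x ∧ MPht f abv x ≤ X ∧
      MPLf f abv ξ x ≤ c₁ * X ^ (-1 / Real.goldenRatio) := hsol
  -- the invariant and the step relation
  have base : ∃ y : Fin 3 → A, (MPprim y ∧ y 0 ≠ 0 ∧
      MPLf f abv ξ y ≤ c₁ * X₀ ^ (-1 / Real.goldenRatio) ∧
      ∀ z : Fin 3 → A, MPprim z → z 0 ≠ 0 →
        MPLf f abv ξ z ≤ MPLf f abv ξ y / 2 → MPht f abv y ≤ MPht f abv z) := by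
    obtain ⟨y, h1, h2, h3, h4, h5⟩ :=
      MP_select f abv ξ habv_A hξ hc₁ hc1lt1 hX₀ hsol' (le_refl X₀)
    exact ⟨y, h1, h2, h4, fun z hz1 hz2 hz3 => le_trans h3 (le_of_lt (h5 z hz1 hz2 hz3))⟩
  have step : ∀ x : Fin 3 → A, (MPprim x ∧ x 0 ≠ 0 ∧
      MPLf f abv ξ x ≤ c₁ * X₀ ^ (-1 / Real.goldenRatio) ∧
      ∀ z : Fin 3 → A, MPprim z → z 0 ≠ 0 →
        MPLf f abv ξ z ≤ MPLf f abv ξ x / 2 → MPht f abv x ≤ MPht f abv z) →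
      ∃ y : Fin 3 → A, (MPprim y ∧ y 0 ≠ 0 ∧
        MPLf f abv ξ y ≤ c₁ * X₀ ^ (-1 / Real.goldenRatio) ∧
        ∀ z : Fin 3 → A, MPprim z → z 0 ≠ 0 →
          MPLf f abv ξ z ≤ MPLf f abv ξ y / 2 → MPht f abv y ≤ MPht f abv z) ∧
      (MPLf f abv ξ x ≤ 2 * c₁ * (MPht f abv y) ^ (-1 / Real.goldenRatio) ∧
       MPLf f abv ξ y ≤ MPLf f abv ξ x / 2 ∧ MPht f abv x ≤ MPht f abv y) := by
    rintro x ⟨hxp, hx0, hxL, hxQ⟩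
    have hlx : 0 < MPLf f abv ξ x := MP_L_pos f abv ξ hξ hx0
    have ha : 0 < 2 * c₁ / MPLf f abv ξ x := by positivity
    have hBpos : 0 < (2 * c₁ / MPLf f abv ξ x) ^ Real.goldenRatio := Real.rpow_pos_of_pos ha _
    have hup : X₀ ^ (1 / Real.goldenRatio) * MPLf f abv ξ x ≤ c₁ := by
      have hmul : X₀ ^ (1 / Real.goldenRatio) * X₀ ^ (-1 / Real.goldenRatio) = 1 := by
        have he : 1 / Real.goldenRatio + -1 / Real.goldenRatio = 0 := by ring
        rw [← Real.rpow_add hX₀pos, he, Real.rpow_zero]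
      have h1 : X₀ ^ (1 / Real.goldenRatio) * MPLf f abv ξ x
          ≤ X₀ ^ (1 / Real.goldenRatio) * (c₁ * X₀ ^ (-1 / Real.goldenRatio)) :=
        mul_le_mul_of_nonneg_left hxL (Real.rpow_nonneg hX₀pos.le _)
      calc X₀ ^ (1 / Real.goldenRatio) * MPLf f abv ξ x
          ≤ X₀ ^ (1 / Real.goldenRatio) * (c₁ * X₀ ^ (-1 / Real.goldenRatio)) := h1
        _ = c₁ * (X₀ ^ (1 / Real.goldenRatio) * X₀ ^ (-1 / Real.goldenRatio)) := by ring
        _ = c₁ := by rw [hmul, mul_one]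
    have haX : X₀ ^ (1 / Real.goldenRatio) ≤ 2 * c₁ / MPLf f abv ξ x := by
      rw [le_div_iff₀ hlx]
      linarith
    have hBX₀ : X₀ ≤ (2 * c₁ / MPLf f abv ξ x) ^ Real.goldenRatio := by
      have h1 : (X₀ ^ (1 / Real.goldenRatio)) ^ Real.goldenRatio
          ≤ (2 * c₁ / MPLf f abv ξ x) ^ Real.goldenRatio :=
        Real.rpow_le_rpow (Real.rpow_nonneg hX₀pos.le _) haX hgpos.le
      have h2 : (X₀ ^ (1 / Real.goldenRatio)) ^ Real.goldenRatio = X₀ := by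
        rw [← Real.rpow_mul hX₀pos.le, one_div_mul_cancel hgne, Real.rpow_one]
      linarith
    have hBcalc : c₁ * ((2 * c₁ / MPLf f abv ξ x) ^ Real.goldenRatio) ^ (-1 / Real.goldenRatio)
        = MPLf f abv ξ x / 2 := by
      have h1 : ((2 * c₁ / MPLf f abv ξ x) ^ Real.goldenRatio) ^ (-1 / Real.goldenRatio)
          = (2 * c₁ / MPLf f abv ξ x) ^ (Real.goldenRatio * (-1 / Real.goldenRatio)) := by
        rw [← Real.rpow_mul ha.le]
      have h2 : Real.goldenRatio * (-1 / Real.goldenRatio) = -1 := by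
        field_simp
      rw [h1, h2, Real.rpow_neg_one, inv_div]
      field_simp
    obtain ⟨y, h1, h2, h3, h4, h5⟩ :=
      MP_select f abv ξ habv_A hξ hc₁ hc1lt1 hX₀ hsol' hBX₀
    rw [hBcalc] at h4
    have hht1 : (1:ℝ) ≤ MPht f abv y := habv_A _ h2
    refine ⟨y, ⟨h1, h2, by linarith, fun z hz1 hz2 hz3 =>
      le_trans h3 (le_of_lt (h5 z hz1 hz2 hz3))⟩, ?_, h4, hxQ y h1 h2 h4⟩
    have h6 : ((2 * c₁ / MPLf f abv ξ x) ^ Real.goldenRatio) ^ (-1 / Real.goldenRatio)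
        ≤ (MPht f abv y) ^ (-1 / Real.goldenRatio) :=
      Real.rpow_le_rpow_of_nonpos (by linarith) h3 hexp
    calc MPLf f abv ξ x
        = 2 * (c₁ * ((2 * c₁ / MPLf f abv ξ x) ^ Real.goldenRatio) ^ (-1 / Real.goldenRatio)) := by
          rw [hBcalc]; ring
      _ ≤ 2 * c₁ * (MPht f abv y) ^ (-1 / Real.goldenRatio) := by nlinarith
  obtain ⟨seq, hP, hR⟩ := MP_depChoice base step
  refine ⟨seq, fun i _ => (hP i).1, fun i _ => ?_, ?_⟩
  · refine ⟨(hR i).1, (hR i).2.1, (hR i).2.2, ?_⟩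
    -- linear independence
    intro c d hcd
    have hcdj : ∀ j, c * algebraMap A K (seq i j) + d * algebraMap A K (seq (i + 1) j) = 0 := by
      intro j
      have := congrFun hcd j
      simpa using this
    have hLpos : 0 < MPLf f abv ξ (seq i) := MP_L_pos f abv ξ hξ (hP i).2.1
    have hhalf : MPLf f abv ξ (seq (i + 1)) ≤ MPLf f abv ξ (seq i) / 2 := (hR i).2.1
    have hczero : ∀ (c' d' : K), (∀ j, c' * algebraMap A K (seq i j)
        + d' * algebraMap A K (seq (i+1) j) = 0) → d' = 0 → c' = 0 := by
      intro c' d' hj hd'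
      by_contra hc'
      have hall : ∀ j, seq i j = 0 := by
        intro j
        have hh := hj j
        rw [hd', zero_mul, add_zero] at hh
        rcases mul_eq_zero.1 hh with h | h
        · exact absurd h hc'
        · exact IsFractionRing.injective A K (by rw [h, map_zero])
      exact MP_prim_ne (hP i).1 ⟨hall 0, hall 1, hall 2⟩
    rcases eq_or_ne d 0 with hd | hd
    · exact ⟨hczero c d hcdj hd, hd⟩
    exfalso
    rcases eq_or_ne c 0 with hc | hc
    · -- then all coordinates of seq (i+1) vanish
      have hall : ∀ j, seq (i + 1) j = 0 := by
        intro j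
        have hh := hcdj j
        rw [hc, zero_mul, zero_add] at hh
        rcases mul_eq_zero.1 hh with h | h
        · exact absurd h hd
        · exact IsFractionRing.injective A K (by rw [h, map_zero])
      exact MP_prim_ne (hP (i+1)).1 ⟨hall 0, hall 1, hall 2⟩
    · have hprop : ∀ j, algebraMap A K (seq (i + 1) j)
          = (-(c / d)) * algebraMap A K (seq i j) := by
        intro j
        have hh := hcdj j
        field_simp
        linear_combination hh
      have := (MP_prop f abv ξ habv_A (hP i).1 (hP (i+1)).1 hprop).2
      linarith
  · -- tendsto
    rw [tendsto_atTop]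
    intro b
    have hB1 : (1:ℝ) ≤ max b 1 := le_max_right _ _
    obtain ⟨ε, hε, hεP⟩ := MP_eps f abv ξ habv_A hξ hB1
    have hL0 : 0 < MPLf f abv ξ (seq 0) := MP_L_pos f abv ξ hξ (hP 0).2.1
    have hdecay : ∀ n, MPLf f abv ξ (seq n) ≤ MPLf f abv ξ (seq 0) * (1 / 2) ^ n := by
      intro n
      induction n with
      | zero => simp
      | succ n ih =>
        have h1 : MPLf f abv ξ (seq (n + 1)) ≤ MPLf f abv ξ (seq n) / 2 := (hR n).2.1
        have h2 : ((1:ℝ) / 2) ^ (n + 1) = (1 / 2) ^ n / 2 := by ring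
        rw [h2]
        linarith
    obtain ⟨N, hN⟩ := exists_pow_lt_of_lt_one
      (show (0:ℝ) < ε / MPLf f abv ξ (seq 0) by positivity)
      (show (1:ℝ)/2 < 1 by norm_num)
    refine eventually_atTop.2 ⟨N, fun n hn => ?_⟩
    have hmono : ((1:ℝ) / 2) ^ n ≤ (1 / 2) ^ N :=
      pow_le_pow_of_le_one (by norm_num) (by norm_num) hn
    have hlt : MPLf f abv ξ (seq n) < ε := by
      have := hdecay n
      have h3 : MPLf f abv ξ (seq 0) * (1 / 2) ^ n ≤ MPLf f abv ξ (seq 0) * (1 / 2) ^ N :=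
        mul_le_mul_of_nonneg_left hmono hL0.le
      have h4 : MPLf f abv ξ (seq 0) * (1 / 2) ^ N < ε := by
        rw [lt_div_iff₀ hL0] at hN
        linarith
      linarith
    by_contra hcon
    push_neg at hcon
    have hle : MPht f abv (seq n) ≤ max b 1 := le_trans hcon.le (le_max_left _ _)
    have := hεP (seq n) (hP n).1 (hP n).2.1 hle
    linarith
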